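/- arXiv:1601.06119 — 4 statements merged into one kernel-verified Lean document; each statement's English description precedes it below -/
import Mathlib

section
/- For finite lists x, c1, c2 over α with c1 ≠ x and c2 ≠ x: δ_CPL(x, c1) < δ_CPL(x, c2) if and only if either cpl(x, c1) > cpl(x, c2), or cpl(x, c1) = cpl(x, c2) and |c1| < |c2|. Moreover, δ_CPL(x, c1) = δ_CPL(x, c2) if and only if cpl(x, c1) = cpl(x, c2) and |c1| = |c2|. -/
/-- The common prefix length of two lists. -/
def cpl {α : Type*} [DecidableEq α] : List α → List α → ℕ
  | a :: as, b :: bs => if a = b then cpl as bs + 1 else 0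
  | _, _ => 0

/-- The common-prefix-length based distance
`δ_CPL x y = L - cpl x y - 1/(|x| + |y| + 1)` for `x ≠ y`, and `0` for `x = y`. -/
def deltaCPL {α : Type*} [DecidableEq α] (L : ℕ) (x y : List α) : ℚ :=
  if x = y then 0
  else (L : ℚ) - cpl x y - 1 / ((x.length : ℚ) + y.length + 1)

/-- For `c1 ≠ x` and `c2 ≠ x`: `δ_CPL x c1 < δ_CPL x c2` iff either
`cpl x c1 > cpl x c2`, or `cpl x c1 = cpl x c2` and `|c1| < |c2|`; and
`δ_CPL x c1 = δ_CPL x c2` iff `cpl x c1 = cpl x c2` and `|c1| = |c2|`. -/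
theorem deltaCPL_compare {α : Type*} [DecidableEq α] (L : ℕ) (x c1 c2 : List α)
    (h1 : c1 ≠ x) (h2 : c2 ≠ x) :
    (deltaCPL L x c1 < deltaCPL L x c2 ↔
      cpl x c2 < cpl x c1 ∨ (cpl x c1 = cpl x c2 ∧ c1.length < c2.length)) ∧
    (deltaCPL L x c1 = deltaCPL L x c2 ↔
      cpl x c1 = cpl x c2 ∧ c1.length = c2.length) := by
  have hx1 : x ≠ c1 := fun h => h1 h.symm
  have hx2 : x ≠ c2 := fun h => h2 h.symm
  simp only [deltaCPL, if_neg hx1, if_neg hx2]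
  have s1pos : (0:ℚ) < (x.length:ℚ) + c1.length + 1 := by positivity
  have s2pos : (0:ℚ) < (x.length:ℚ) + c2.length + 1 := by positivity
  have t1pos : (0:ℚ) < 1/((x.length:ℚ) + c1.length + 1) := by positivity
  have t2pos : (0:ℚ) < 1/((x.length:ℚ) + c2.length + 1) := by positivity
  have t1le : 1/((x.length:ℚ) + c1.length + 1) ≤ 1 := by
    rw [div_le_one s1pos]
    have : (0:ℚ) ≤ (x.length:ℚ) := by positivity
    have : (0:ℚ) ≤ (c1.length:ℚ) := by positivity
    linarith
  have t2le : 1/((x.length:ℚ) + c2.length + 1) ≤ 1 := by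
    rw [div_le_one s2pos]
    have : (0:ℚ) ≤ (x.length:ℚ) := by positivity
    have : (0:ℚ) ≤ (c2.length:ℚ) := by positivity
    linarith
  have tlt : 1/((x.length:ℚ) + c2.length + 1) < 1/((x.length:ℚ) + c1.length + 1)
      ↔ c1.length < c2.length := by
    rw [one_div_lt_one_div s2pos s1pos]
    constructor
    · intro h
      have : (c1.length:ℚ) < c2.length := by linarith
      exact_mod_cast this
    · intro h
      have : (c1.length:ℚ) < c2.length := by exact_mod_cast h
      linarith
  have teq : 1/((x.length:ℚ) + c1.length + 1) = 1/((x.length:ℚ) + c2.length + 1)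
      ↔ c1.length = c2.length := by
    rw [div_eq_div_iff s1pos.ne' s2pos.ne']
    constructor
    · intro h
      have : (c1.length:ℚ) = c2.length := by linarith
      exact_mod_cast this
    · intro h
      have : (c1.length:ℚ) = c2.length := by exact_mod_cast h
      linarith
  rcases Nat.lt_trichotomy (cpl x c1) (cpl x c2) with hab | hab | hab
  · have hc : ((cpl x c1 : ℚ)) + 1 ≤ (cpl x c2 : ℚ) := by exact_mod_cast hab
    constructor
    · constructor
      · intro h; linarith
      · rintro (h | ⟨h, _⟩) <;> omega
    · constructor
      · intro h; linarith
      · rintro ⟨h, _⟩; omega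
  · have hc : ((cpl x c1 : ℚ)) = (cpl x c2 : ℚ) := by exact_mod_cast hab
    constructor
    · constructor
      · intro h
        right
        refine ⟨hab, tlt.mp ?_⟩
        linarith
      · rintro (h | ⟨-, h⟩)
        · omega
        · have := tlt.mpr h; linarith
    · constructor
      · intro h
        refine ⟨hab, teq.mp ?_⟩
        linarith
      · rintro ⟨-, h⟩
        have := teq.mpr h; linarith
  · have hc : ((cpl x c2 : ℚ)) + 1 ≤ (cpl x c1 : ℚ) := by exact_mod_cast hab
    constructor
    · constructor
      · intro _; exact Or.inl hab
      · intro _; linarith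
    · constructor
      · intro h; linarith
      · rintro ⟨h, _⟩; omega
end

section
/- Let h : BitVec b → BitVec b be injective and k̃ : BitVec b. Then for all finite lists x and c of b-bit strings, cpl(hc(k̃, x), hc(k̃, c)) = cpl(x, c); i.e., the hash cascade exactly preserves common prefix lengths, so a node can determine the common prefix length of any coordinate with the receiver's coordinate from the return address alone. -/
/-- The hash cascade: `hc h k [a₁, …, a_l] = [d₁, …, d_l]` with `d₁ = h (k ^^^ a₁)` and
`d_j = h (d_{j-1} ^^^ a_j)`. -/
def hc {b : ℕ} (h : BitVec b → BitVec b) : BitVec b → List (BitVec b) → List (BitVec b)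
  | _, [] => []
  | k, a :: as => h (k ^^^ a) :: hc h (h (k ^^^ a)) as

/-- For an injective `h`, the hash cascade exactly preserves common prefix lengths:
`cpl (hc h k̃ x) (hc h k̃ c) = cpl x c` for all lists `x`, `c` of `b`-bit strings. -/
theorem cpl_hc {b : ℕ} (h : BitVec b → BitVec b) (hinj : Function.Injective h)
    (k : BitVec b) (x c : List (BitVec b)) :
    cpl (hc h k x) (hc h k c) = cpl x c := by
  induction x generalizing k c with
  | nil => cases c <;> simp [hc, cpl]
  | cons a as ih =>
    cases c with
    | nil => simp [hc, cpl]
    | cons d ds =>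
      simp only [hc, cpl]
      by_cases hd : a = d
      · subst hd; simp [ih]
      · have : h (k ^^^ a) ≠ h (k ^^^ d) := fun he => hd (by
          have := hinj he
          simpa [← BitVec.xor_assoc, BitVec.xor_self, BitVec.zero_xor] using congrArg (k ^^^ ·) this)
        simp [hd, this]
end

section
/- Let x be a coordinate with |x| < L and x' a padded coordinate of x. Then for every coordinate c with c ≠ x and cpl(x', c) ≤ |x|: δ_TD(x', c) > δ_TD(x', x) = L − |x|, and δ_CPL(x', c) > δ_CPL(x', x). Hence x is the unique minimizer of both δ_TD(x', ·) and δ_CPL(x', ·) over any set of coordinates c satisfying cpl(x', c) ≤ |x|; i.e., the receiver's coordinate is the unique closest coordinate to its padded coordinate. -/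
/-- The tree distance `δ_TD x y = |x| + |y| - 2 · cpl x y`. -/
def deltaTD {α : Type*} [DecidableEq α] (x y : List α) : ℤ :=
  (x.length : ℤ) + y.length - 2 * cpl x y

lemma cpl_le_right {α : Type*} [DecidableEq α] : ∀ (a b : List α), cpl a b ≤ b.length
  | a :: as, b :: bs => by
      by_cases h : a = b
      · simpa [cpl, h] using cpl_le_right as bs
      · simp [cpl, h]
  | [], b => by cases b <;> simp [cpl]
  | a :: as, [] => by simp [cpl]

lemma cpl_of_prefix {α : Type*} [DecidableEq α] : ∀ (a b : List α), b <+: a → cpl a b = b.length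
  | a, [], _ => by cases a <;> simp [cpl]
  | [], b :: bs, h => by simp at h
  | a :: as, b :: bs, h => by
      rw [List.cons_prefix_cons] at h
      obtain ⟨rfl, h⟩ := h
      simp [cpl, cpl_of_prefix as bs h]

lemma prefix_of_cpl {α : Type*} [DecidableEq α] :
    ∀ (a b : List α), cpl a b = b.length → b <+: a
  | a, [], _ => List.nil_prefix
  | [], b :: bs, h => by simp [cpl] at h
  | a :: as, b :: bs, h => by
      by_cases hab : a = b
      · subst hab
        simp [cpl] at h
        exact List.cons_prefix_cons.mpr ⟨rfl, prefix_of_cpl as bs h⟩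
      · simp [cpl, hab] at h

/-- Let `x` be a coordinate with `|x| < L` and `x'` a padded coordinate of `x`
(a list of length `L` with `x` as a prefix). Then for every coordinate `c ≠ x`
with `cpl x' c ≤ |x|`: `δ_TD x' x = L - |x|`, `δ_TD x' c > δ_TD x' x`, and
`δ_CPL x' c > δ_CPL x' x`; i.e., `x` is the unique closest coordinate to the
padded coordinate `x'` for both distances. -/
theorem padded_unique_closest {α : Type*} [DecidableEq α] (L : ℕ) (x x' : List α)
    (hlen : x.length < L) (hpre : x <+: x') (hplen : x'.length = L)
    (c : List α) (hne : c ≠ x) (hcpl : cpl x' c ≤ x.length) :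
    deltaTD x' x = (L : ℤ) - x.length ∧
    deltaTD x' x < deltaTD x' c ∧
    deltaCPL L x' x < deltaCPL L x' c := by
  have hx : cpl x' x = x.length := cpl_of_prefix x' x hpre
  have hkc : cpl x' c ≤ c.length := cpl_le_right x' c
  -- not both equalities
  have hkey : cpl x' c < x.length ∨ c.length > x.length := by
    rcases lt_or_eq_of_le hcpl with h | h
    · exact Or.inl h
    · right
      rcases lt_or_eq_of_le hkc with h2 | h2
      · omega
      · exfalso
        have hcpre : c <+: x' := prefix_of_cpl x' c h2
        have hcx : c <+: x :=
          List.prefix_of_prefix_length_le hcpre hpre (by omega)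
        have : c = x := hcx.eq_of_length (by omega)
        exact hne this
  have hTD : deltaTD x' x = (L : ℤ) - x.length := by
    simp [deltaTD, hx, hplen]; ring
  refine ⟨hTD, ?_, ?_⟩
  · rw [hTD]
    have : (cpl x' c : ℤ) ≤ x.length := by exact_mod_cast hcpl
    have h2 : (cpl x' c : ℤ) ≤ c.length := by exact_mod_cast hkc
    simp only [deltaTD, hplen]
    rcases hkey with h3 | h3
    · have : (cpl x' c : ℤ) < x.length := by exact_mod_cast h3
      linarith
    · have : (x.length : ℤ) < c.length := by exact_mod_cast h3
      linarith
  · have hxx' : x' ≠ x := by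
      intro h; rw [h] at hplen; omega
    have hx'c : x' ≠ c := by
      intro h
      rw [← h] at hcpl
      rw [cpl_of_prefix x' x' (List.prefix_refl x')] at hcpl
      omega
    rw [deltaCPL, deltaCPL, if_neg hxx', if_neg hx'c, hx, hplen]
    have hL1 : (1 : ℚ) ≤ L := by exact_mod_cast Nat.one_le_iff_ne_zero.mpr (by omega)
    have hdx : (0 : ℚ) < (L : ℚ) + x.length + 1 := by positivity
    have hdc : (0 : ℚ) < (L : ℚ) + c.length + 1 := by positivity
    rcases lt_or_eq_of_le hcpl with h | h
    · have h1 : (cpl x' c : ℚ) + 1 ≤ x.length := by exact_mod_cast h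
      have h2 : 1 / ((L : ℚ) + c.length + 1) < 1 := by
        rw [div_lt_one hdc]
        have : (0:ℚ) ≤ (c.length : ℚ) := by positivity
        linarith
      have h3 : 0 < 1 / ((L : ℚ) + x.length + 1) := by positivity
      linarith
    · -- cpl x' c = x.length, so c.length > x.length
      have h4 : x.length < c.length := by
        rcases hkey with h5 | h5
        · omega
        · exact h5
      have h5 : (1:ℚ) / ((L : ℚ) + c.length + 1) < 1 / ((L : ℚ) + x.length + 1) := by
        apply one_div_lt_one_div_of_lt hdx
        have : (x.length : ℚ) < c.length := by exact_mod_cast h4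
        linarith
      rw [h]
      linarith
end

section
/- Let x ≠ e be coordinates. (i) If cpl(x, e) < |x| (x is not a prefix of e), then δ_TD(dropLast(x), e) = δ_TD(x, e) − 1, where dropLast(x) is x with its last element removed. (ii) If cpl(x, e) = |x| (x is a proper prefix of e), then the child coordinate c = take(|x| + 1, e) (the prefix of e of length |x| + 1) satisfies δ_TD(c, e) = δ_TD(x, e) − 1. Hence in the prefix-tree embedding every node with coordinate distinct from e has a tree neighbor (its parent or one of its children) strictly closer to e with respect to δ_TD: the embedding is greedy. -/
lemma cpl_le_left {α : Type*} [DecidableEq α] : ∀ x y : List α, cpl x y ≤ x.length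
  | [], _ => by simp [cpl]
  | a :: as, [] => by simp [cpl]
  | a :: as, b :: bs => by
    simp only [cpl, List.length_cons]
    split
    · exact Nat.succ_le_succ (cpl_le_left as bs)
    · omega

lemma cpl_comm {α : Type*} [DecidableEq α] : ∀ x y : List α, cpl x y = cpl y x
  | [], [] => rfl
  | [], b :: bs => by simp [cpl]
  | a :: as, [] => by simp [cpl]
  | a :: as, b :: bs => by
    simp only [cpl, cpl_comm as bs]
    by_cases h : a = b <;> simp [h, Ne.symm, eq_comm]

lemma cpl_le_right_s12 {α : Type*} [DecidableEq α] (x y : List α) : cpl x y ≤ y.length := by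
  rw [cpl_comm]; exact cpl_le_left y x

lemma cpl_self {α : Type*} [DecidableEq α] : ∀ x : List α, cpl x x = x.length
  | [] => by simp [cpl]
  | a :: as => by simp [cpl, cpl_self as]

lemma cpl_take {α : Type*} [DecidableEq α] :
    ∀ (n : ℕ) (x y : List α), cpl (x.take n) y = min n (cpl x y)
  | 0, _, _ => by simp [cpl]
  | n+1, [], y => by simp [cpl]
  | n+1, a :: as, [] => by simp [cpl]
  | n+1, a :: as, b :: bs => by
    simp only [List.take_succ_cons, cpl]
    split
    · rw [cpl_take n as bs]; omega
    · simp

lemma eq_of_cpl_full {α : Type*} [DecidableEq α] :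
    ∀ x y : List α, cpl x y = x.length → x.length = y.length → x = y
  | [], [], _, _ => rfl
  | [], b :: bs, _, h => by simp at h
  | a :: as, [], _, h => by simp at h
  | a :: as, b :: bs, hc, h => by
    simp only [cpl, List.length_cons] at hc h
    split at hc
    · next hab => rw [hab, eq_of_cpl_full as bs (by omega) (by omega)]
    · omega

/-- In the prefix-tree embedding, every node `x ≠ e` has a tree neighbor strictly closer
to `e` w.r.t. `δ_TD`: (i) if `cpl x e < |x|`, the parent `dropLast x` satisfies
`δ_TD (dropLast x) e = δ_TD x e - 1`; (ii) if `cpl x e = |x|`, the child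
`take (|x|+1) e` satisfies `δ_TD (take (|x|+1) e) e = δ_TD x e - 1`. Hence there is a
parent or child of `x` strictly closer to `e`: the embedding is greedy. -/
theorem prefix_tree_greedy_TD {α : Type*} [DecidableEq α] (x e : List α) (hne : x ≠ e) :
    (cpl x e < x.length → deltaTD x.dropLast e = deltaTD x e - 1) ∧
    (cpl x e = x.length → deltaTD (e.take (x.length + 1)) e = deltaTD x e - 1) ∧
    (∃ c : List α, (c = x.dropLast ∨ (c.dropLast = x ∧ c.length = x.length + 1)) ∧
      deltaTD c e < deltaTD x e) := by
  have hle := cpl_le_left x e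
  have hre := cpl_le_right_s12 x e
  have h1 : cpl x e < x.length → deltaTD x.dropLast e = deltaTD x e - 1 := by
    intro h
    have hc : cpl x.dropLast e = cpl x e := by
      rw [List.dropLast_eq_take, cpl_take]; omega
    have hl : x.dropLast.length = x.length - 1 := List.length_dropLast
    simp only [deltaTD, hc, hl]
    have h1' : 1 ≤ x.length := by omega
    push_cast [Nat.cast_sub h1']
    try ring
  have hlt : cpl x e = x.length → x.length < e.length := by
    intro h
    rcases lt_or_eq_of_le hre with h' | h'
    · omega
    · exact absurd (eq_of_cpl_full x e h (by omega)) hne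
  have h2 : cpl x e = x.length → deltaTD (e.take (x.length + 1)) e = deltaTD x e - 1 := by
    intro h
    have hlt' := hlt h
    have hc : cpl (e.take (x.length + 1)) e = x.length + 1 := by
      rw [cpl_take, cpl_self]; omega
    have hl : (e.take (x.length + 1)).length = x.length + 1 := by
      rw [List.length_take]; omega
    simp only [deltaTD, hc, hl, h]
    push_cast
    try ring
  refine ⟨h1, h2, ?_⟩
  rcases lt_or_eq_of_le hle with h | h
  · exact ⟨x.dropLast, Or.inl rfl, by rw [h1 h]; omega⟩
  · have hlt' := hlt h
    refine ⟨e.take (x.length + 1), Or.inr ⟨?_, ?_⟩, by rw [h2 h]; omega⟩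
    · have hx : x = e.take x.length := by
        apply eq_of_cpl_full
        · rw [cpl_comm, cpl_take, cpl_comm]; omega
        · rw [List.length_take]; omega
      rw [List.dropLast_eq_take, List.length_take]
      have hm : min (x.length + 1) e.length - 1 = x.length := by omega
      rw [hm, List.take_take, min_eq_left (by omega)]
      exact hx.symm
    · rw [List.length_take]; omega
end
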